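/- Let k ≥ 3 and let σ, ρ be permutations of P_k. If σ and ρ are right similar, then the dual permutations σ* and ρ* are left similar; if σ and ρ are left similar, then σ* and ρ* are right similar; and if σ and ρ are two-sided similar, then σ* and ρ* are two-sided similar. -/

import Mathlib

open Matrix

/-- `σ` is a permutation of `P_n = {1,…,n}`, viewed as a function `ℕ → ℕ`. -/
def IsPermOn (n : ℕ) (σ : ℕ → ℕ) : Prop :=
  Set.BijOn σ (Set.Icc 1 n) (Set.Icc 1 n)

/-- The Petrie matrix of a map `σ` on `P_n`: the `(n-1) × (n-1)` real matrix whose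
`(i,j)` entry (with `1`-based indices) is `1` iff
`min (σ i) (σ (i+1)) ≤ j ≤ max (σ i) (σ (i+1)) - 1`, and `0` otherwise. -/
def petrie (n : ℕ) (σ : ℕ → ℕ) : Matrix (Fin (n - 1)) (Fin (n - 1)) ℝ :=
  Matrix.of fun i j =>
    if min (σ (i.1 + 1)) (σ (i.1 + 2)) ≤ j.1 + 1 ∧
        j.1 + 1 ≤ max (σ (i.1 + 1)) (σ (i.1 + 2)) - 1 then 1 else 0

/-- Two square real matrices are similar if `B = P * A * P⁻¹` for some invertible `P`. -/
def MatSimilar {m : Type*} [Fintype m] [DecidableEq m] (A B : Matrix m m ℝ) : Prop :=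
  ∃ P : Matrix m m ℝ, IsUnit P ∧ B = P * A * P⁻¹

/-- `σ'` (a permutation of `P_{k+n}`) is a right extension of `σ` (a permutation of `P_k`). -/
def IsRightExt (k n : ℕ) (σ σ' : ℕ → ℕ) : Prop :=
  IsPermOn (k + n) σ' ∧
  (∀ i, 1 ≤ i → i ≤ k - 1 → σ' i = σ i) ∧
  ∃ t, k + 1 ≤ t ∧ t ≤ k + n ∧ σ' t = σ k ∧
    ∀ j, j ≠ t → k ≤ j → j ≤ k + n → k < σ' j

/-- `(σ', ρ')` is a synchronized right extension of `(σ, ρ)` to `P_{k+n}`. -/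
def IsSyncRightExt (k n : ℕ) (σ ρ σ' ρ' : ℕ → ℕ) : Prop :=
  IsRightExt k n σ σ' ∧ IsRightExt k n ρ ρ' ∧
  ∃ t, k + 1 ≤ t ∧ t ≤ k + n ∧ σ' t = σ k ∧ ρ' t = ρ k ∧
    ∀ i, i ≠ t → k ≤ i → i ≤ k + n → σ' i = ρ' i

/-- `σ'` (a permutation of `P_{m+k}`) is a left extension of `σ` (a permutation of `P_k`). -/
def IsLeftExt (k m : ℕ) (σ σ' : ℕ → ℕ) : Prop :=
  IsPermOn (m + k) σ' ∧
  (∀ i, 2 ≤ i → i ≤ k → σ' (m + i) = m + σ i) ∧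
  ∃ s, 1 ≤ s ∧ s ≤ m ∧ σ' s = m + σ 1 ∧
    ∀ j, j ≠ s → 1 ≤ j → j ≤ m + 1 → σ' j < m + 1

/-- `(σ', ρ')` is a synchronized left extension of `(σ, ρ)` to `P_{m+k}`. -/
def IsSyncLeftExt (k m : ℕ) (σ ρ σ' ρ' : ℕ → ℕ) : Prop :=
  IsLeftExt k m σ σ' ∧ IsLeftExt k m ρ ρ' ∧
  ∃ s, 1 ≤ s ∧ s ≤ m ∧ σ' s = m + σ 1 ∧ ρ' s = m + ρ 1 ∧
    ∀ i, i ≠ s → 1 ≤ i → i ≤ m + 1 → σ' i = ρ' i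

/-- `σ'` (a permutation of `P_{m+k+n}`) is a two-sided extension of `σ` (a permutation of `P_k`). -/
def IsTwoSidedExt (k m n : ℕ) (σ σ' : ℕ → ℕ) : Prop :=
  IsPermOn (m + k + n) σ' ∧
  (∀ i, 2 ≤ i → i ≤ k - 1 → σ' (m + i) = m + σ i) ∧
  (∃ s, 1 ≤ s ∧ s ≤ m ∧ σ' s = m + σ 1 ∧
    ∀ i, i ≠ s → 1 ≤ i → i ≤ m + 1 → σ' i < m + 1) ∧
  (∃ t, m + k + 1 ≤ t ∧ t ≤ m + k + n ∧ σ' t = m + σ k ∧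
    ∀ j, j ≠ t → m + k ≤ j → j ≤ m + k + n → m + k < σ' j)

/-- `(σ', ρ')` is a synchronized two-sided extension of `(σ, ρ)` to `P_{m+k+n}`. -/
def IsSyncTwoSidedExt (k m n : ℕ) (σ ρ σ' ρ' : ℕ → ℕ) : Prop :=
  IsTwoSidedExt k m n σ σ' ∧ IsTwoSidedExt k m n ρ ρ' ∧
  ∃ s t, 1 ≤ s ∧ s ≤ m ∧ m + k + 1 ≤ t ∧ t ≤ m + k + n ∧
    σ' s = m + σ 1 ∧ ρ' s = m + ρ 1 ∧ σ' t = m + σ k ∧ ρ' t = m + ρ k ∧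
    ∀ i, i ≠ s → i ≠ t →
      ((1 ≤ i ∧ i ≤ m + 1) ∨ (m + k ≤ i ∧ i ≤ m + k + n)) → σ' i = ρ' i

/-- `σ` and `ρ` (permutations of `P_k`) are right similar. -/
def RightSimilar (k : ℕ) (σ ρ : ℕ → ℕ) : Prop :=
  ∀ n, 1 ≤ n → ∀ σ' ρ' : ℕ → ℕ, IsSyncRightExt k n σ ρ σ' ρ' →
    MatSimilar (petrie (k + n) σ') (petrie (k + n) ρ')

/-- `σ` and `ρ` (permutations of `P_k`) are left similar. -/
def LeftSimilar (k : ℕ) (σ ρ : ℕ → ℕ) : Prop :=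
  ∀ m, 1 ≤ m → ∀ σ' ρ' : ℕ → ℕ, IsSyncLeftExt k m σ ρ σ' ρ' →
    MatSimilar (petrie (m + k) σ') (petrie (m + k) ρ')

/-- `σ` and `ρ` (permutations of `P_k`) are two-sided similar. -/
def TwoSidedSimilar (k : ℕ) (σ ρ : ℕ → ℕ) : Prop :=
  ∀ m n, 1 ≤ m → 1 ≤ n → ∀ σ' ρ' : ℕ → ℕ, IsSyncTwoSidedExt k m n σ ρ σ' ρ' →
    MatSimilar (petrie (m + k + n) σ') (petrie (m + k + n) ρ')

/-- `σ` and `ρ` (permutations of `P_k`) are right weakly similar. -/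
def RightWeaklySimilar (k : ℕ) (σ ρ : ℕ → ℕ) : Prop :=
  ∀ n, 1 ≤ n → ∀ σ' ρ' : ℕ → ℕ, IsSyncRightExt k n σ ρ σ' ρ' →
    (petrie (k + n) σ').charpoly = (petrie (k + n) ρ').charpoly

/-- The dual permutation `θ*` of a permutation `θ` of `P_k`: `θ*(i) = k+1 - θ(k+1-i)`. -/
def dualPerm (k : ℕ) (θ : ℕ → ℕ) : ℕ → ℕ := fun i => k + 1 - θ (k + 1 - i)


section Aux

lemma matSimilar_refl {m : Type*} [Fintype m] [DecidableEq m] (A : Matrix m m ℝ) :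
    MatSimilar A A := ⟨1, isUnit_one, by simp⟩

lemma matSimilar_symm {m : Type*} [Fintype m] [DecidableEq m] {A B : Matrix m m ℝ}
    (h : MatSimilar A B) : MatSimilar B A := by
  obtain ⟨P, hP, rfl⟩ := h
  refine ⟨P⁻¹, (Matrix.isUnit_nonsing_inv_iff).2 hP, ?_⟩
  rw [Matrix.nonsing_inv_nonsing_inv _ ((Matrix.isUnit_iff_isUnit_det P).1 hP)]
  rw [← Matrix.mul_assoc, ← Matrix.mul_assoc,
    Matrix.nonsing_inv_mul _ ((Matrix.isUnit_iff_isUnit_det P).1 hP), Matrix.one_mul,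
    Matrix.mul_assoc, Matrix.nonsing_inv_mul _ ((Matrix.isUnit_iff_isUnit_det P).1 hP),
    Matrix.mul_one]

lemma matSimilar_trans {m : Type*} [Fintype m] [DecidableEq m] {A B C : Matrix m m ℝ}
    (h1 : MatSimilar A B) (h2 : MatSimilar B C) : MatSimilar A C := by
  obtain ⟨P, hP, rfl⟩ := h1
  obtain ⟨Q, hQ, rfl⟩ := h2
  refine ⟨Q * P, hQ.mul hP, ?_⟩
  rw [Matrix.mul_inv_rev]
  noncomm_ring

lemma matSimilar_submatrix {m : Type*} [Fintype m] [DecidableEq m] (A : Matrix m m ℝ)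
    (e : m ≃ m) : MatSimilar A (A.submatrix e e) := by
  have hPQ : (e.toPEquiv.toMatrix : Matrix m m ℝ) * e.symm.toPEquiv.toMatrix = 1 := by
    rw [← PEquiv.toMatrix_trans, ← Equiv.toPEquiv_trans]; simp
  have hQP : (e.symm.toPEquiv.toMatrix : Matrix m m ℝ) * e.toPEquiv.toMatrix = 1 :=
    mul_eq_one_comm.1 hPQ
  refine ⟨e.toPEquiv.toMatrix, ⟨⟨_, _, hPQ, hQP⟩, rfl⟩, ?_⟩
  rw [Matrix.inv_eq_right_inv hPQ, PEquiv.toMatrix_toPEquiv_mul, PEquiv.mul_toMatrix_toPEquiv]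
  simp [Matrix.submatrix_submatrix]

lemma isPermOn_dual {n : ℕ} {θ : ℕ → ℕ} (h : IsPermOn n θ) : IsPermOn n (dualPerm n θ) := by
  have hr : Set.BijOn (fun i => n + 1 - i) (Set.Icc 1 n) (Set.Icc 1 n) := by
    have hinv : Set.InvOn (fun i : ℕ => n + 1 - i) (fun i : ℕ => n + 1 - i)
        (Set.Icc 1 n) (Set.Icc 1 n) :=
      ⟨fun x hx => by simp only [Set.mem_Icc] at hx ⊢; omega,
       fun x hx => by simp only [Set.mem_Icc] at hx ⊢; omega⟩
    exact hinv.bijOn (fun x hx => by simp only [Set.mem_Icc] at hx ⊢; omega)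
      (fun x hx => by simp only [Set.mem_Icc] at hx ⊢; omega)
  have heq : dualPerm n θ = (fun i => n + 1 - i) ∘ (θ ∘ (fun i => n + 1 - i)) := rfl
  rw [IsPermOn, heq]
  exact hr.comp (h.comp hr)

lemma petrie_dual {n : ℕ} (hn : 3 ≤ n) {θ : ℕ → ℕ} (h : IsPermOn n θ) :
    petrie n (dualPerm n θ) = (petrie n θ).submatrix Fin.rev Fin.rev := by
  ext i j
  have hi := i.2
  have hj := j.2
  have ha := h.mapsTo (Set.mem_Icc.2 (by omega : 1 ≤ n - 1 - i.1 ∧ n - 1 - i.1 ≤ n))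
  have hb := h.mapsTo (Set.mem_Icc.2 (by omega : 1 ≤ n - i.1 ∧ n - i.1 ≤ n))
  simp only [Set.mem_Icc] at ha hb
  simp only [petrie, Matrix.submatrix_apply, Matrix.of_apply, Fin.val_rev, dualPerm]
  have e1 : n + 1 - (i.1 + 1) = n - i.1 := by omega
  have e2 : n + 1 - (i.1 + 2) = n - 1 - i.1 := by omega
  have e3 : n - 1 - (i.1 + 1) + 1 = n - 1 - i.1 := by omega
  have e4 : n - 1 - (i.1 + 1) + 2 = n - i.1 := by omega
  have e5 : n - 1 - (j.1 + 1) + 1 = n - 1 - j.1 := by omega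
  simp only [e1, e2, e3, e4, e5]
  refine if_congr ?_ rfl rfl
  obtain ⟨ha1, ha2⟩ := ha; obtain ⟨hb1, hb2⟩ := hb
  rcases le_total (θ (n - 1 - i.1)) (θ (n - i.1)) with hab | hab <;>
    simp only [min_def, max_def, if_pos, if_neg, hab] <;>
    split_ifs <;> omega

lemma matSimilar_petrie_dual {n : ℕ} (hn : 3 ≤ n) {θ : ℕ → ℕ} (h : IsPermOn n θ) :
    MatSimilar (petrie n θ) (petrie n (dualPerm n θ)) := by
  rw [petrie_dual hn h]
  have := matSimilar_submatrix (petrie n θ) (Fin.revPerm)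
  simpa [Fin.revPerm] using this

lemma dual_val (N : ℕ) (σ'' : ℕ → ℕ) {x : ℕ} (hx : x ≤ N + 1) :
    dualPerm N σ'' (N + 1 - x) = N + 1 - σ'' x := by
  simp only [dualPerm]; rw [show N + 1 - (N + 1 - x) = x from by omega]

lemma sigma_bounds {k : ℕ} {σ : ℕ → ℕ} (hσ : IsPermOn k σ) {i : ℕ} (h1 : 1 ≤ i) (h2 : i ≤ k) :
    1 ≤ σ i ∧ σ i ≤ k := by
  have := hσ.mapsTo (Set.mem_Icc.2 ⟨h1, h2⟩); simpa [Set.mem_Icc] using this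

lemma dual_rightExt_of_leftExt {k m : ℕ} (hk : 3 ≤ k) {σ σ'' : ℕ → ℕ} (hσ : IsPermOn k σ)
    (h : IsLeftExt k m (dualPerm k σ) σ'') : IsRightExt k m σ (dualPerm (m + k) σ'') := by
  obtain ⟨hperm, h2, s, hs1, hs2, hs3, hs4⟩ := h
  refine ⟨?_, ?_, m + k + 1 - s, by omega, by omega, ?_, ?_⟩
  · rw [show k + m = m + k from Nat.add_comm k m]; exact isPermOn_dual hperm
  · intro i hi1 hi2
    obtain ⟨hl, hr⟩ := sigma_bounds hσ (i := i) (by omega) (by omega)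
    have h2' := h2 (k + 1 - i) (by omega) (by omega)
    simp only [dualPerm] at h2'
    rw [show k + 1 - (k + 1 - i) = i from by omega] at h2'
    simp only [dualPerm]
    rw [show m + k + 1 - i = m + (k + 1 - i) from by omega, h2']
    omega
  · obtain ⟨hl, hr⟩ := sigma_bounds hσ (by omega : 1 ≤ k) le_rfl
    rw [dual_val (m + k) σ'' (by omega), hs3]
    simp only [dualPerm]
    rw [show k + 1 - 1 = k from by omega]
    omega
  · intro j hj hj1 hj2
    have := hs4 (m + k + 1 - j) (by omega) (by omega) (by omega)
    simp only [dualPerm]; omega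

lemma dual_leftExt_of_rightExt {k n : ℕ} (hk : 3 ≤ k) {σ σ'' : ℕ → ℕ} (hσ : IsPermOn k σ)
    (h : IsRightExt k n (dualPerm k σ) σ'') : IsLeftExt k n σ (dualPerm (k + n) σ'') := by
  obtain ⟨hperm, h2, t, ht1, ht2, ht3, ht4⟩ := h
  refine ⟨?_, ?_, k + n + 1 - t, by omega, by omega, ?_, ?_⟩
  · rw [show n + k = k + n from Nat.add_comm n k]; exact isPermOn_dual hperm
  · intro i hi1 hi2
    obtain ⟨hl, hr⟩ := sigma_bounds hσ (i := i) (by omega) hi2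
    have h2' := h2 (k + 1 - i) (by omega) (by omega)
    simp only [dualPerm] at h2'
    rw [show k + 1 - (k + 1 - i) = i from by omega] at h2'
    simp only [dualPerm]
    rw [show k + n + 1 - (n + i) = k + 1 - i from by omega, h2']
    omega
  · obtain ⟨hl, hr⟩ := sigma_bounds hσ le_rfl (by omega)
    rw [dual_val (k + n) σ'' (by omega), ht3]
    simp only [dualPerm]
    rw [show k + 1 - k = 1 from by omega]
    omega
  · intro j hj hj1 hj2
    have := ht4 (k + n + 1 - j) (by omega) (by omega) (by omega)
    simp only [dualPerm]; omega

lemma dual_twoSidedExt {k m n : ℕ} (hk : 3 ≤ k) {σ σ'' : ℕ → ℕ} (hσ : IsPermOn k σ)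
    (h : IsTwoSidedExt k m n (dualPerm k σ) σ'') :
    IsTwoSidedExt k n m σ (dualPerm (m + k + n) σ'') := by
  obtain ⟨hperm, h2, ⟨s, hs1, hs2, hs3, hs4⟩, ⟨t, ht1, ht2, ht3, ht4⟩⟩ := h
  refine ⟨?_, ?_, ⟨m + k + n + 1 - t, by omega, by omega, ?_, ?_⟩,
    ⟨m + k + n + 1 - s, by omega, by omega, ?_, ?_⟩⟩
  · rw [show n + k + m = m + k + n from by omega]; exact isPermOn_dual hperm
  · intro i hi1 hi2
    obtain ⟨hl, hr⟩ := sigma_bounds hσ (i := i) (by omega) (by omega)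
    have h2' := h2 (k + 1 - i) (by omega) (by omega)
    simp only [dualPerm] at h2'
    rw [show k + 1 - (k + 1 - i) = i from by omega] at h2'
    simp only [dualPerm]
    rw [show m + k + n + 1 - (n + i) = m + (k + 1 - i) from by omega, h2']
    omega
  · obtain ⟨hl, hr⟩ := sigma_bounds hσ le_rfl (by omega)
    rw [dual_val (m + k + n) σ'' (by omega), ht3]
    simp only [dualPerm]
    rw [show k + 1 - k = 1 from by omega]
    omega
  · intro i hi hi1 hi2
    have := ht4 (m + k + n + 1 - i) (by omega) (by omega) (by omega)
    simp only [dualPerm]; omega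
  · obtain ⟨hl, hr⟩ := sigma_bounds hσ (by omega : 1 ≤ k) le_rfl
    rw [dual_val (m + k + n) σ'' (by omega), hs3]
    simp only [dualPerm]
    rw [show k + 1 - 1 = k from by omega]
    omega
  · intro j hj hj1 hj2
    have := hs4 (m + k + n + 1 - j) (by omega) (by omega) (by omega)
    simp only [dualPerm]; omega

lemma dual_syncRight {k m : ℕ} (hk : 3 ≤ k) {σ ρ σ'' ρ'' : ℕ → ℕ}
    (hσ : IsPermOn k σ) (hρ : IsPermOn k ρ)
    (h : IsSyncLeftExt k m (dualPerm k σ) (dualPerm k ρ) σ'' ρ'') :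
    IsSyncRightExt k m σ ρ (dualPerm (m + k) σ'') (dualPerm (m + k) ρ'') := by
  obtain ⟨h1, h2, s, hs1, hs2, hσs, hρs, hagree⟩ := h
  refine ⟨dual_rightExt_of_leftExt hk hσ h1, dual_rightExt_of_leftExt hk hρ h2,
    m + k + 1 - s, by omega, by omega, ?_, ?_, ?_⟩
  · obtain ⟨hl, hr⟩ := sigma_bounds hσ (by omega : 1 ≤ k) le_rfl
    rw [dual_val (m + k) σ'' (by omega), hσs]
    simp only [dualPerm]
    rw [show k + 1 - 1 = k from by omega]
    omega
  · obtain ⟨hl, hr⟩ := sigma_bounds hρ (by omega : 1 ≤ k) le_rfl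
    rw [dual_val (m + k) ρ'' (by omega), hρs]
    simp only [dualPerm]
    rw [show k + 1 - 1 = k from by omega]
    omega
  · intro i hi hik him
    simp only [dualPerm]
    rw [hagree (m + k + 1 - i) (by omega) (by omega) (by omega)]

lemma dual_syncLeft {k n : ℕ} (hk : 3 ≤ k) {σ ρ σ'' ρ'' : ℕ → ℕ}
    (hσ : IsPermOn k σ) (hρ : IsPermOn k ρ)
    (h : IsSyncRightExt k n (dualPerm k σ) (dualPerm k ρ) σ'' ρ'') :
    IsSyncLeftExt k n σ ρ (dualPerm (k + n) σ'') (dualPerm (k + n) ρ'') := by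
  obtain ⟨h1, h2, t, ht1, ht2, hσt, hρt, hagree⟩ := h
  refine ⟨dual_leftExt_of_rightExt hk hσ h1, dual_leftExt_of_rightExt hk hρ h2,
    k + n + 1 - t, by omega, by omega, ?_, ?_, ?_⟩
  · obtain ⟨hl, hr⟩ := sigma_bounds hσ le_rfl (by omega)
    rw [dual_val (k + n) σ'' (by omega), hσt]
    simp only [dualPerm]
    rw [show k + 1 - k = 1 from by omega]
    omega
  · obtain ⟨hl, hr⟩ := sigma_bounds hρ le_rfl (by omega)
    rw [dual_val (k + n) ρ'' (by omega), hρt]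
    simp only [dualPerm]
    rw [show k + 1 - k = 1 from by omega]
    omega
  · intro i hi hi1 hi2
    simp only [dualPerm]
    rw [hagree (k + n + 1 - i) (by omega) (by omega) (by omega)]

lemma dual_syncTwoSided {k m n : ℕ} (hk : 3 ≤ k) {σ ρ σ'' ρ'' : ℕ → ℕ}
    (hσ : IsPermOn k σ) (hρ : IsPermOn k ρ)
    (h : IsSyncTwoSidedExt k m n (dualPerm k σ) (dualPerm k ρ) σ'' ρ'') :
    IsSyncTwoSidedExt k n m σ ρ (dualPerm (m + k + n) σ'') (dualPerm (m + k + n) ρ'') := by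
  obtain ⟨h1, h2, s, t, hs1, hs2, ht1, ht2, hσs, hρs, hσt, hρt, hagree⟩ := h
  refine ⟨dual_twoSidedExt hk hσ h1, dual_twoSidedExt hk hρ h2,
    m + k + n + 1 - t, m + k + n + 1 - s, by omega, by omega, by omega, by omega,
    ?_, ?_, ?_, ?_, ?_⟩
  · obtain ⟨hl, hr⟩ := sigma_bounds hσ le_rfl (by omega)
    rw [dual_val (m + k + n) σ'' (by omega), hσt]
    simp only [dualPerm]
    rw [show k + 1 - k = 1 from by omega]
    omega
  · obtain ⟨hl, hr⟩ := sigma_bounds hρ le_rfl (by omega)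
    rw [dual_val (m + k + n) ρ'' (by omega), hρt]
    simp only [dualPerm]
    rw [show k + 1 - k = 1 from by omega]
    omega
  · obtain ⟨hl, hr⟩ := sigma_bounds hσ (by omega : 1 ≤ k) le_rfl
    rw [dual_val (m + k + n) σ'' (by omega), hσs]
    simp only [dualPerm]
    rw [show k + 1 - 1 = k from by omega]
    omega
  · obtain ⟨hl, hr⟩ := sigma_bounds hρ (by omega : 1 ≤ k) le_rfl
    rw [dual_val (m + k + n) ρ'' (by omega), hρs]
    simp only [dualPerm]
    rw [show k + 1 - 1 = k from by omega]
    omega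
  · intro i hit his hrange
    simp only [dualPerm]
    rw [hagree (m + k + n + 1 - i) (by omega) (by omega) (by omega)]

end Aux

/-- Theorem 3. -/
theorem dualPerm_similar (k : ℕ) (hk : 3 ≤ k) (σ ρ : ℕ → ℕ)
    (hσ : IsPermOn k σ) (hρ : IsPermOn k ρ) :
    (RightSimilar k σ ρ → LeftSimilar k (dualPerm k σ) (dualPerm k ρ)) ∧
    (LeftSimilar k σ ρ → RightSimilar k (dualPerm k σ) (dualPerm k ρ)) ∧
    (TwoSidedSimilar k σ ρ → TwoSidedSimilar k (dualPerm k σ) (dualPerm k ρ)) := by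
  refine ⟨?_, ?_, ?_⟩
  · -- Right similar → dual Left similar
    intro hR m hm σ'' ρ'' hext
    have hpσ : IsPermOn (m + k) σ'' := hext.1.1
    have hpρ : IsPermOn (m + k) ρ'' := hext.2.1.1
    have hsync := dual_syncRight hk hσ hρ hext
    have h1 := hR m hm _ _ hsync
    rw [show k + m = m + k from Nat.add_comm k m] at h1
    exact matSimilar_trans (matSimilar_petrie_dual (by omega) hpσ)
      (matSimilar_trans h1 (matSimilar_symm (matSimilar_petrie_dual (by omega) hpρ)))
  · -- Left similar → dual Right similar
    intro hL n hn σ'' ρ'' hext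
    have hpσ : IsPermOn (k + n) σ'' := hext.1.1
    have hpρ : IsPermOn (k + n) ρ'' := hext.2.1.1
    have hsync := dual_syncLeft hk hσ hρ hext
    have h1 := hL n hn _ _ hsync
    rw [show n + k = k + n from Nat.add_comm n k] at h1
    exact matSimilar_trans (matSimilar_petrie_dual (by omega) hpσ)
      (matSimilar_trans h1 (matSimilar_symm (matSimilar_petrie_dual (by omega) hpρ)))
  · -- Two-sided similar → dual Two-sided similar
    intro hT m n hm hn σ'' ρ'' hext
    have hpσ : IsPermOn (m + k + n) σ'' := hext.1.1
    have hpρ : IsPermOn (m + k + n) ρ'' := hext.2.1.1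
    have hsync := dual_syncTwoSided hk hσ hρ hext
    have h1 := hT n m hn hm _ _ hsync
    rw [show n + k + m = m + k + n from by omega] at h1
    exact matSimilar_trans (matSimilar_petrie_dual (by omega) hpσ)
      (matSimilar_trans h1 (matSimilar_symm (matSimilar_petrie_dual (by omega) hpρ)))
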